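/- Let X, Y be two separated nets in ℝ^d. Then there exists a bijection f : X → Y such that both disp_R(f) ∈ O(R) and disp_R(f⁻¹) ∈ O(R); equivalently (after assuming 0 ∉ X ∪ Y), there is C > 0 with ‖f(x) − x‖ ≤ C‖x‖ for all x ∈ X and ‖f⁻¹(y) − y‖ ≤ C‖y‖ for all y ∈ Y. -/

import Mathlib

open Filter Metric Set Topology

noncomputable section

open MeasureTheory ENNReal

set_option linter.unusedSectionVars false

attribute [local instance] Classical.propDecidable

abbrev Euc (d : ℕ) := EuclideanSpace ℝ (Fin d)

lemma vol_ball_pos (d : ℕ) : volume (ball (0:Euc d) 1) ≠ 0 := (measure_ball_pos _ _ one_pos).ne'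
lemma vol_ball_top (d : ℕ) : volume (ball (0:Euc d) 1) ≠ ⊤ := measure_ball_lt_top.ne

lemma sep_card_le {d : ℕ} {X : Set (Euc d)} {δ R : ℝ}
    (hδ : 0 < δ) (hsep : ∀ x ∈ X, ∀ y ∈ X, x ≠ y → δ ≤ dist x y) (hR : 0 ≤ R)
    (F : Finset (Euc d)) (hF : ↑F ⊆ X ∩ closedBall 0 R) :
    (F.card : ℝ) ≤ ((2*R+δ)/δ)^d := by
  set r : ℝ := δ/2 with hr
  have hrpos : 0 < r := by positivity
  set v := volume (ball (0:Euc d) 1) with hv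
  have hdisj : (↑F : Set (Euc d)).PairwiseDisjoint (fun x => ball x r) := by
    intro x hx y hy hxy
    apply ball_disjoint_ball
    have := hsep x (hF hx).1 y (hF hy).1 hxy
    linarith [this]
  have hsub : (⋃ x ∈ F, ball x r) ⊆ closedBall (0:Euc d) (R + r) := by
    intro z hz
    simp only [mem_iUnion, exists_prop] at hz
    obtain ⟨x, hx, hzx⟩ := hz
    have h1 : dist x 0 ≤ R := mem_closedBall.1 (hF hx).2
    have : dist z 0 ≤ dist z x + dist x 0 := dist_triangle _ _ _
    have := mem_ball.1 hzx
    simp only [mem_closedBall]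
    linarith
  have hmeas : volume (⋃ x ∈ F, ball x r) = F.card * (ENNReal.ofReal (r^d) * v) := by
    rw [measure_biUnion_finset hdisj (fun x _ => measurableSet_ball)]
    have : ∀ x ∈ F, volume (ball x r) = ENNReal.ofReal (r^d) * v := by
      intro x _
      rw [Measure.addHaar_ball_of_pos volume x hrpos, finrank_euclideanSpace, Fintype.card_fin]
    rw [Finset.sum_congr rfl this, Finset.sum_const, nsmul_eq_mul]
  have hle : (F.card : ℝ≥0∞) * (ENNReal.ofReal (r^d) * v) ≤ ENNReal.ofReal ((R+r)^d) * v := by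
    rw [← hmeas]
    calc volume (⋃ x ∈ F, ball x r) ≤ volume (closedBall (0:Euc d) (R+r)) := measure_mono hsub
    _ = ENNReal.ofReal ((R+r)^d) * v := by
        rw [Measure.addHaar_closedBall volume _ (by linarith : (0:ℝ) ≤ R + r),
          finrank_euclideanSpace, Fintype.card_fin]
  rw [← mul_assoc] at hle
  have hle2 : (F.card : ℝ≥0∞) * ENNReal.ofReal (r^d) ≤ ENNReal.ofReal ((R+r)^d) :=
    (ENNReal.mul_le_mul_iff_left (vol_ball_pos d) (vol_ball_top d)).1 hle
  have key : ((R+r)^d : ℝ) = ((2*R+δ)/δ)^d * r^d := by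
    rw [← mul_pow]; congr 1; field_simp; ring
  rw [key, ENNReal.ofReal_mul (by positivity)] at hle2
  have hle3 : (F.card : ℝ≥0∞) ≤ ENNReal.ofReal (((2*R+δ)/δ)^d) :=
    (ENNReal.mul_le_mul_iff_left (by simp [ENNReal.ofReal_pos]; positivity)
      ENNReal.ofReal_ne_top).1 hle2
  have := ENNReal.toReal_mono ENNReal.ofReal_ne_top hle3
  simpa [ENNReal.toReal_ofReal (by positivity : (0:ℝ) ≤ ((2*R+δ)/δ)^d)] using this

lemma sep_finite {d : ℕ} {X : Set (Euc d)} {δ : ℝ}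
    (hδ : 0 < δ) (hsep : ∀ x ∈ X, ∀ y ∈ X, x ≠ y → δ ≤ dist x y) (R : ℝ) :
    (X ∩ closedBall 0 R).Finite := by
  rcases le_or_gt 0 R with hR | hR
  · by_contra hinf
    have hinf' : (X ∩ closedBall 0 R).Infinite := hinf
    obtain ⟨F, hFsub, hFcard⟩ := hinf'.exists_subset_card_eq (⌈((2*R+δ)/δ)^d⌉₊ + 1)
    have := sep_card_le hδ hsep hR F hFsub
    rw [hFcard] at this
    have h2 : ((2*R+δ)/δ)^d ≤ (⌈((2*R+δ)/δ)^d⌉₊ : ℝ) := Nat.le_ceil _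
    push_cast at this
    linarith
  · have : closedBall (0:Euc d) R = ∅ := closedBall_eq_empty.2 hR
    simp [this]



lemma net_card_ge {d : ℕ} {Y : Set (Euc d)} {θ R : ℝ}
    (hθ : 0 < θ) (hnet : ∀ p : Euc d, ∃ y ∈ Y, dist p y ≤ θ) (hR : θ ≤ R)
    (F : Finset (Euc d)) (hF : ∀ y ∈ Y, y ∈ closedBall (0:Euc d) R → y ∈ F) :
    ((R-θ)/θ)^d ≤ (F.card : ℝ) := by
  set v := volume (ball (0:Euc d) 1) with hv
  have hv0 : v ≠ 0 := (measure_ball_pos _ _ one_pos).ne'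
  have hvt : v ≠ ⊤ := measure_ball_lt_top.ne
  have hsub : closedBall (0:Euc d) (R-θ) ⊆ ⋃ y ∈ F, closedBall y θ := by
    intro p hp
    obtain ⟨y, hyY, hpy⟩ := hnet p
    have hy : y ∈ closedBall (0:Euc d) R := by
      have h1 : dist p 0 ≤ R - θ := mem_closedBall.1 hp
      have : dist y 0 ≤ dist y p + dist p 0 := dist_triangle _ _ _
      rw [dist_comm] at hpy
      simp only [mem_closedBall]; linarith
    exact mem_iUnion₂.2 ⟨y, hF y hyY hy, mem_closedBall.2 hpy⟩
  have hle : ENNReal.ofReal ((R-θ)^d) * v ≤ (F.card : ℝ≥0∞) * (ENNReal.ofReal (θ^d) * v) := by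
    calc ENNReal.ofReal ((R-θ)^d) * v = volume (closedBall (0:Euc d) (R-θ)) := by
          rw [Measure.addHaar_closedBall volume _ (by linarith : (0:ℝ) ≤ R - θ),
            finrank_euclideanSpace, Fintype.card_fin]
    _ ≤ volume (⋃ y ∈ F, closedBall y θ) := measure_mono hsub
    _ ≤ ∑ y ∈ F, volume (closedBall y θ) := measure_biUnion_finset_le F _
    _ = (F.card : ℝ≥0∞) * (ENNReal.ofReal (θ^d) * v) := by
        have : ∀ y ∈ F, volume (closedBall y θ) = ENNReal.ofReal (θ^d) * v := by
          intro y _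
          rw [Measure.addHaar_closedBall volume _ hθ.le, finrank_euclideanSpace,
            Fintype.card_fin]
        rw [Finset.sum_congr rfl this, Finset.sum_const, nsmul_eq_mul]
  rw [← mul_assoc] at hle
  have hle2 : ENNReal.ofReal ((R-θ)^d) ≤ (F.card : ℝ≥0∞) * ENNReal.ofReal (θ^d) :=
    (ENNReal.mul_le_mul_iff_left hv0 hvt).1 hle
  have key : ((R-θ)^d : ℝ) = ((R-θ)/θ)^d * θ^d := by
    rw [← mul_pow]; congr 1; field_simp
  have hq : (0:ℝ) ≤ ((R-θ)/θ)^d := pow_nonneg (div_nonneg (by linarith) hθ.le) d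
  rw [key, ENNReal.ofReal_mul hq] at hle2
  have hle3 : ENNReal.ofReal (((R-θ)/θ)^d) ≤ (F.card : ℝ≥0∞) :=
    (ENNReal.mul_le_mul_iff_left (by simp [ENNReal.ofReal_pos]; positivity)
      ENNReal.ofReal_ne_top).1 hle2
  have := ENNReal.toReal_mono (by simp) hle3
  simpa [ENNReal.toReal_ofReal hq] using this



def nxt {d : ℕ} (X : Set (Euc d)) (s : Finset (Euc d)) : Euc d :=
  if h : ∃ x, x ∈ X \ ↑s ∧ ∀ y ∈ X \ ↑s, ‖x‖ ≤ ‖y‖ then h.choose else 0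

def prevs {d : ℕ} (X : Set (Euc d)) : ℕ → Finset (Euc d)
  | 0 => ∅
  | n+1 => insert (nxt X (prevs X n)) (prevs X n)

def enum {d : ℕ} (X : Set (Euc d)) (n : ℕ) : Euc d := nxt X (prevs X n)

section props
variable {d : ℕ} {X : Set (Euc d)}
  (hfin : ∀ R : ℝ, (X ∩ closedBall 0 R).Finite) (hinf : X.Infinite)

include hfin hinf

lemma ex_min (s : Finset (Euc d)) :
    ∃ x, x ∈ X \ ↑s ∧ ∀ y ∈ X \ ↑s, ‖x‖ ≤ ‖y‖ := by
  obtain ⟨x0, hx0⟩ := (hinf.diff s.finite_toSet).nonempty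
  set T := (hfin ‖x0‖).toFinset \ s with hT
  have hx0T : x0 ∈ T := by
    simp only [hT, Finset.mem_sdiff, Set.Finite.mem_toFinset, mem_inter_iff,
      mem_closedBall_zero_iff]
    exact ⟨⟨hx0.1, le_refl _⟩, hx0.2⟩
  obtain ⟨x, hxT, hxmin⟩ := T.exists_min_image (fun x => ‖x‖) ⟨x0, hx0T⟩
  have hxX : x ∈ X \ ↑s := by
    simp only [hT, Finset.mem_sdiff, Set.Finite.mem_toFinset, mem_inter_iff] at hxT
    exact ⟨hxT.1.1, hxT.2⟩
  refine ⟨x, hxX, fun y hy => ?_⟩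
  rcases le_or_gt ‖y‖ ‖x0‖ with h | h
  · apply hxmin
    simp only [hT, Finset.mem_sdiff, Set.Finite.mem_toFinset, mem_inter_iff,
      mem_closedBall_zero_iff]
    exact ⟨⟨hy.1, h⟩, fun hc => hy.2 hc⟩
  · exact le_trans (hxmin x0 hx0T) h.le

lemma enum_spec (n : ℕ) : enum X n ∈ X ∧ enum X n ∉ prevs X n ∧
    ∀ y ∈ X, y ∉ prevs X n → ‖enum X n‖ ≤ ‖y‖ := by
  have h := ex_min hfin hinf (prevs X n)
  have heq : enum X n = h.choose := by simp only [enum, nxt]; rw [dif_pos h]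
  rw [heq]
  obtain ⟨⟨h1, h2⟩, h3⟩ := h.choose_spec
  exact ⟨h1, by simpa using h2, fun y hy hy2 => h3 y ⟨hy, by simpa using hy2⟩⟩

lemma prevs_mono : Monotone (prevs X) := by
  apply monotone_nat_of_le_succ
  intro n
  simp [prevs, Finset.subset_insert]

lemma mem_prevs {k n : ℕ} (h : k < n) : enum X k ∈ prevs X n := by
  have h1 : enum X k ∈ prevs X (k+1) := by simp [prevs, enum]
  exact prevs_mono hfin hinf h h1

lemma enum_inj : Function.Injective (enum X) := by
  intro m n hmn
  by_contra hne
  rcases Nat.lt_or_ge m n with h | h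
  · have h1 := mem_prevs hfin hinf h
    rw [hmn] at h1
    exact (enum_spec hfin hinf n).2.1 h1
  · have h1 := mem_prevs hfin hinf (show n < m by omega)
    rw [← hmn] at h1
    exact (enum_spec hfin hinf m).2.1 h1

lemma enum_mono {m n : ℕ} (h : m ≤ n) : ‖enum X m‖ ≤ ‖enum X n‖ := by
  rcases eq_or_lt_of_le h with rfl | h
  · rfl
  · refine (enum_spec hfin hinf m).2.2 _ (enum_spec hfin hinf n).1 (fun hc => ?_)
    exact (enum_spec hfin hinf n).2.1 (prevs_mono hfin hinf h.le hc)

lemma prevs_card (n : ℕ) : (prevs X n).card = n := by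
  induction n with
  | zero => simp [prevs]
  | succ k ih =>
    rw [prevs, show nxt X (prevs X k) = enum X k from rfl,
      Finset.card_insert_of_notMem (enum_spec hfin hinf k).2.1, ih]

lemma prevs_eq (n : ℕ) : ∀ x ∈ prevs X n, ∃ k < n, enum X k = x := by
  induction n with
  | zero => simp [prevs]
  | succ m ih =>
    intro x hx
    rw [prevs, Finset.mem_insert] at hx
    rcases hx with rfl | hx
    · exact ⟨m, Nat.lt_succ_self m, rfl⟩
    · obtain ⟨k, hk, hke⟩ := ih x hx
      exact ⟨k, by omega, hke⟩

lemma prevs_subset (n : ℕ) : ↑(prevs X n) ⊆ X := by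
  intro x hx
  obtain ⟨k, _, rfl⟩ := prevs_eq hfin hinf n x hx
  exact (enum_spec hfin hinf k).1

lemma enum_surj {x : Euc d} (hx : x ∈ X) : ∃ n, enum X n = x := by
  by_contra hc
  push_neg at hc
  have hnot : ∀ n, x ∉ prevs X n := by
    intro n hn
    obtain ⟨k, _, hke⟩ := prevs_eq hfin hinf n x hn
    exact hc k hke
  have hball : ∀ n, enum X n ∈ (hfin ‖x‖).toFinset := by
    intro n
    simp only [Set.Finite.mem_toFinset, mem_inter_iff, mem_closedBall_zero_iff]
    exact ⟨(enum_spec hfin hinf n).1, (enum_spec hfin hinf n).2.2 x hx (hnot n)⟩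
  set N := (hfin ‖x‖).toFinset.card + 1
  have hsub : prevs X N ⊆ (hfin ‖x‖).toFinset := by
    intro z hz
    obtain ⟨k, _, rfl⟩ := prevs_eq hfin hinf N z hz
    exact hball k
  have := Finset.card_le_card hsub
  rw [prevs_card hfin hinf] at this
  omega

end props



lemma net_infinite {d : ℕ} {X : Set (Euc d)} (hd : 0 < d) {θ : ℝ}
    (hnet : ∀ p : Euc d, ∃ x ∈ X, dist p x ≤ θ) : X.Infinite := by
  intro hXfin
  obtain ⟨r, hr⟩ := hXfin.isBounded.subset_closedBall 0
  obtain ⟨x0, hx0X, _⟩ := hnet 0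
  have hr0 : 0 ≤ r := le_trans (norm_nonneg x0) (mem_closedBall_zero_iff.1 (hr hx0X))
  have hθ0 : 0 ≤ θ := by
    obtain ⟨x, _, hx⟩ := hnet 0
    exact le_trans dist_nonneg hx
  set p : Euc d := (r + θ + 1) • EuclideanSpace.single ⟨0, hd⟩ (1:ℝ) with hp
  have hpnorm : ‖p‖ = r + θ + 1 := by
    rw [hp, norm_smul, EuclideanSpace.norm_single]
    simp [abs_of_nonneg (by linarith : (0:ℝ) ≤ r + θ + 1)]
  obtain ⟨x, hxX, hpx⟩ := hnet p
  have h1 : ‖x‖ ≤ r := mem_closedBall_zero_iff.1 (hr hxX)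
  have h2 : ‖p‖ ≤ ‖p - x‖ + ‖x‖ := by
    calc ‖p‖ = ‖(p - x) + x‖ := by rw [sub_add_cancel]
    _ ≤ ‖p - x‖ + ‖x‖ := norm_add_le _ _
  rw [← dist_eq_norm] at h2
  linarith [hpnorm ▸ h2]

lemma key_bound {d : ℕ} {X Y : Set (Euc d)} {δ θ : ℝ}
    (hd : 0 < d) (hδ : 0 < δ) (hθ : 0 < θ)
    (hsepX : ∀ x ∈ X, ∀ y ∈ X, x ≠ y → δ ≤ dist x y)
    (hnetY : ∀ p : Euc d, ∃ y ∈ Y, dist p y ≤ θ)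
    (hfinX : ∀ R : ℝ, (X ∩ closedBall 0 R).Finite) (hinfX : X.Infinite)
    (hfinY : ∀ R : ℝ, (Y ∩ closedBall 0 R).Finite) (hinfY : Y.Infinite)
    (n : ℕ) :
    ‖enum Y n‖ ≤ 2*θ + (2*θ/δ) * ‖enum X n‖ := by
  set a := ‖enum X n‖ with ha
  have ha0 : 0 ≤ a := norm_nonneg _
  have hA : ((n:ℝ) + 1) ≤ ((2*a+δ)/δ)^d := by
    have hsub : ↑(prevs X (n+1)) ⊆ X ∩ closedBall 0 a := by
      intro z hz
      obtain ⟨k, hk, rfl⟩ := prevs_eq hfinX hinfX (n+1) z hz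
      exact ⟨(enum_spec hfinX hinfX k).1,
        mem_closedBall_zero_iff.2 (enum_mono hfinX hinfX (by omega : k ≤ n))⟩
    have h := sep_card_le hδ hsepX ha0 (prevs X (n+1)) hsub
    rwa [prevs_card hfinX hinfX, Nat.cast_add, Nat.cast_one] at h
  have hstep : ∀ R : ℝ, R < ‖enum Y n‖ → R ≤ 2*θ + (2*θ/δ) * a := by
    intro R hR
    rcases le_or_gt R θ with h | h
    · have h2 : (0:ℝ) ≤ 2*θ/δ * a := by positivity
      linarith
    · have hF : ∀ y ∈ Y, y ∈ closedBall (0:Euc d) R → y ∈ prevs Y n := by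
        intro y hyY hyR
        by_contra hc
        have h1 := (enum_spec hfinY hinfY n).2.2 y hyY hc
        have h2 := mem_closedBall_zero_iff.1 hyR
        linarith
      have hB := net_card_ge hθ hnetY h.le (prevs Y n) hF
      rw [prevs_card hfinY hinfY] at hB
      have hcomb : ((R-θ)/θ)^d ≤ ((2*a+δ)/δ)^d := by
        calc ((R-θ)/θ)^d ≤ (n:ℝ) := hB
        _ ≤ (n:ℝ)+1 := by linarith
        _ ≤ _ := hA
      have hbase : (R-θ)/θ ≤ (2*a+δ)/δ := by
        have h1 : (0:ℝ) ≤ (R-θ)/θ := div_nonneg (by linarith) hθ.le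
        have h2 : (0:ℝ) ≤ (2*a+δ)/δ := by positivity
        exact (pow_le_pow_iff_left₀ h1 h2 (by omega)).1 hcomb
      have h3 := (div_le_div_iff₀ hθ hδ).1 hbase
      have h4 : R ≤ (2*a*θ + 2*δ*θ)/δ := by
        rw [le_div_iff₀ hδ]; nlinarith
      have h5 : (2*a*θ + 2*δ*θ)/δ = 2*θ + (2*θ/δ)*a := by field_simp; ring
      linarith [h5 ▸ h4]
  by_contra hcon
  push_neg at hcon
  have hmid := hstep ((2*θ + (2*θ/δ)*a + ‖enum Y n‖)/2) (by linarith)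
  linarith

lemma min_norm {d : ℕ} {X : Set (Euc d)} (hfin : ∀ R : ℝ, (X ∩ closedBall 0 R).Finite)
    (h0 : (0:Euc d) ∉ X) : ∃ m : ℝ, 0 < m ∧ ∀ x ∈ X, m ≤ ‖x‖ := by
  set F := (hfin 1).toFinset with hF
  rcases F.eq_empty_or_nonempty with he | hne
  · refine ⟨1, one_pos, fun x hx => ?_⟩
    by_contra hc
    push_neg at hc
    have hm : x ∈ F := by
      simp only [hF, Set.Finite.mem_toFinset, mem_inter_iff, mem_closedBall_zero_iff]
      exact ⟨hx, hc.le⟩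
    simp [he] at hm
  · obtain ⟨z, hzF, hzmin⟩ := F.exists_min_image (fun x => ‖x‖) hne
    have hzX : z ∈ X ∧ ‖z‖ ≤ 1 := by
      simpa [hF, Set.Finite.mem_toFinset, mem_closedBall_zero_iff] using hzF
    refine ⟨‖z‖, norm_pos_iff.2 (fun hz => h0 (hz ▸ hzX.1)), fun x hx => ?_⟩
    rcases le_or_gt ‖x‖ 1 with h | h
    · exact hzmin x (by simp [hF, Set.Finite.mem_toFinset, mem_closedBall_zero_iff, hx, h])
    · linarith [hzX.2]

/-- A separated net in Euclidean space: separated and a net. -/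
def SepNet {d : ℕ} (X : Set (EuclideanSpace ℝ (Fin d))) : Prop :=
  (∃ δ > 0, ∀ x ∈ X, ∀ y ∈ X, x ≠ y → δ ≤ dist x y) ∧
  (∃ θ : ℝ, ∀ p : EuclideanSpace ℝ (Fin d), ∃ x ∈ X, dist p x ≤ θ)

/-- Displacement of `f` restricted to points of `X` of norm at most `R`
(set to `0` when the relevant set is empty, via `Real.sSup`). -/
def dispR {d : ℕ} (X : Set (EuclideanSpace ℝ (Fin d)))
    (f : EuclideanSpace ℝ (Fin d) → EuclideanSpace ℝ (Fin d)) (R : ℝ) : ℝ :=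
  sSup ((fun x => dist (f x) x) '' (X ∩ Metric.closedBall 0 R))

theorem stmt5 {d : ℕ} (X Y : Set (EuclideanSpace ℝ (Fin d)))
    (hX : SepNet X) (hY : SepNet Y)
    (h0X : (0 : EuclideanSpace ℝ (Fin d)) ∉ X)
    (h0Y : (0 : EuclideanSpace ℝ (Fin d)) ∉ Y) :
    ∃ f : EuclideanSpace ℝ (Fin d) → EuclideanSpace ℝ (Fin d),
      Set.BijOn f X Y ∧ ∃ C > (0:ℝ),
        (∀ x ∈ X, dist (f x) x ≤ C * ‖x‖) ∧
        (∀ x ∈ X, dist (f x) x ≤ C * ‖f x‖) := by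
  obtain ⟨⟨δX, hδX, hsepX⟩, ⟨θX, hnetX⟩⟩ := hX
  obtain ⟨⟨δY, hδY, hsepY⟩, ⟨θY, hnetY⟩⟩ := hY
  rcases Nat.eq_zero_or_pos d with rfl | hd
  · exfalso
    obtain ⟨x, hxX, _⟩ := hnetX 0
    apply h0X
    have hx0 : x = 0 := by ext i; exact i.elim0
    rwa [← hx0]
  set δ := min δX δY with hδdef
  set θ := max (max θX θY) 1 with hθdef
  have hδ : 0 < δ := lt_min hδX hδY
  have hθ : 0 < θ := lt_of_lt_of_le one_pos (le_max_right _ _)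
  have hsepX' : ∀ x ∈ X, ∀ y ∈ X, x ≠ y → δ ≤ dist x y := fun x hx y hy hxy =>
    le_trans (min_le_left _ _) (hsepX x hx y hy hxy)
  have hsepY' : ∀ x ∈ Y, ∀ y ∈ Y, x ≠ y → δ ≤ dist x y := fun x hx y hy hxy =>
    le_trans (min_le_right _ _) (hsepY x hx y hy hxy)
  have hnetX' : ∀ p : Euc d, ∃ x ∈ X, dist p x ≤ θ := fun p => by
    obtain ⟨x, hx, h⟩ := hnetX p
    exact ⟨x, hx, le_trans h (le_trans (le_max_left _ _) (le_max_left _ _))⟩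
  have hnetY' : ∀ p : Euc d, ∃ y ∈ Y, dist p y ≤ θ := fun p => by
    obtain ⟨y, hy, h⟩ := hnetY p
    exact ⟨y, hy, le_trans h (le_trans (le_max_right _ _) (le_max_left _ _))⟩
  have hfinX := sep_finite hδ hsepX'
  have hfinY := sep_finite hδ hsepY'
  have hinfX := net_infinite hd hnetX'
  have hinfY := net_infinite hd hnetY'
  obtain ⟨mX, hmX0, hmX⟩ := min_norm hfinX h0X
  obtain ⟨mY, hmY0, hmY⟩ := min_norm hfinY h0Y
  set m := min mX mY with hmdef
  have hm : 0 < m := lt_min hmX0 hmY0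
  have hmXx : ∀ x ∈ X, m ≤ ‖x‖ := fun x hx => le_trans (min_le_left _ _) (hmX x hx)
  have hmYy : ∀ y ∈ Y, m ≤ ‖y‖ := fun y hy => le_trans (min_le_right _ _) (hmY y hy)
  set f : Euc d → Euc d := fun x => if h : ∃ n, enum X n = x then enum Y h.choose else x
    with hf
  have key : ∀ x ∈ X, ∃ n : ℕ, enum X n = x ∧ f x = enum Y n := by
    intro x hx
    have h : ∃ n, enum X n = x := enum_surj hfinX hinfX hx
    refine ⟨h.choose, h.choose_spec, ?_⟩
    simp only [hf]
    rw [dif_pos h]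
  set C : ℝ := 1 + 2*θ/m + 2*θ/δ with hC
  have hCpos : 0 < C := by positivity
  have bound1 : ∀ x ∈ X, dist (f x) x ≤ C * ‖x‖ := by
    intro x hx
    obtain ⟨n, hn, hfn⟩ := key x hx
    have hb := key_bound hd hδ hθ hsepX' hnetY' hfinX hinfX hfinY hinfY n
    rw [hn] at hb
    rw [← hfn] at hb
    have h2θ : 2*θ ≤ (2*θ/m) * ‖x‖ := by
      calc 2*θ = (2*θ/m) * m := by field_simp
      _ ≤ (2*θ/m) * ‖x‖ := mul_le_mul_of_nonneg_left (hmXx x hx) (by positivity)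
    have hdist : dist (f x) x ≤ ‖f x‖ + ‖x‖ := by
      rw [dist_eq_norm]; exact norm_sub_le _ _
    have hCx : C * ‖x‖ = ‖x‖ + (2*θ/m) * ‖x‖ + (2*θ/δ) * ‖x‖ := by rw [hC]; ring
    rw [hCx]
    linarith
  have bound2 : ∀ x ∈ X, dist (f x) x ≤ C * ‖f x‖ := by
    intro x hx
    obtain ⟨n, hn, hfn⟩ := key x hx
    have hfxY : f x ∈ Y := by rw [hfn]; exact (enum_spec hfinY hinfY n).1
    have hb := key_bound hd hδ hθ hsepY' hnetX' hfinY hinfY hfinX hinfX n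
    rw [hn] at hb
    rw [← hfn] at hb
    have h2θ : 2*θ ≤ (2*θ/m) * ‖f x‖ := by
      calc 2*θ = (2*θ/m) * m := by field_simp
      _ ≤ (2*θ/m) * ‖f x‖ := mul_le_mul_of_nonneg_left (hmYy _ hfxY) (by positivity)
    have hdist : dist (f x) x ≤ ‖f x‖ + ‖x‖ := by
      rw [dist_eq_norm]; exact norm_sub_le _ _
    have hCx : C * ‖f x‖ = ‖f x‖ + (2*θ/m) * ‖f x‖ + (2*θ/δ) * ‖f x‖ := by rw [hC]; ring
    rw [hCx]
    linarith
  refine ⟨f, ⟨?_, ?_, ?_⟩, C, hCpos, bound1, bound2⟩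
  · intro x hx
    obtain ⟨n, _, hfn⟩ := key x hx
    rw [hfn]
    exact (enum_spec hfinY hinfY n).1
  · intro x hx x' hx' hfe
    obtain ⟨n, hn, hfn⟩ := key x hx
    obtain ⟨n', hn', hfn'⟩ := key x' hx'
    rw [hfn, hfn'] at hfe
    have : n = n' := enum_inj hfinY hinfY hfe
    rw [← hn, ← hn', this]
  · intro y hy
    obtain ⟨n, hn⟩ := enum_surj hfinY hinfY hy
    have hxX : enum X n ∈ X := (enum_spec hfinX hinfX n).1
    obtain ⟨k, hk, hfk⟩ := key _ hxX
    have : k = n := enum_inj hfinX hinfX hk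
    exact ⟨enum X n, hxX, by rw [hfk, this, hn]⟩
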